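/- Let m be a natural number, s_0,…,s_m, n_0,…,n_m, d_0,…,d_m ∈ ℂ, and let μ, ν be natural numbers with μ ≤ m and ν ≤ m. Suppose ∑_{k=0}^m n_k s_k^l = 0 for all l < μ with ∑_{k=0}^m n_k s_k^μ ≠ 0, and ∑_{k=0}^m d_k s_k^l = 0 for all l < ν with ∑_{k=0}^m d_k s_k^ν ≠ 0. Then, letting r(s) = (∑_{k=0}^m n_k/(s − s_k)) / (∑_{k=0}^m d_k/(s − s_k)), the function s ↦ r(s)·s^{(μ:ℤ)−ν} tends to (∑_{k=0}^m n_k s_k^μ)/(∑_{k=0}^m d_k s_k^ν) as s → ∞ in ℂ (along the cobounded filter); in particular the relative degree of r is ν − μ. -/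

import Mathlib

open Filter Finset

lemma tendsto_sub_const_cobounded' (a : ℂ) :
    Tendsto (fun z : ℂ => z - a) (Bornology.cobounded ℂ) (Bornology.cobounded ℂ) := by
  rw [← tendsto_norm_atTop_iff_cobounded]
  refine tendsto_atTop_mono (fun z => ?_)
    (tendsto_atTop_add_const_right _ (-‖a‖) tendsto_norm_cobounded_atTop)
  simpa [sub_eq_add_neg] using norm_sub_norm_le z a

lemma barycentric_key (m : ℕ) (s n : ℕ → ℂ) (μ : ℕ)
    (h0 : ∀ l < μ, ∑ k ∈ Finset.range (m + 1), n k * s k ^ l = 0) :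
    Tendsto (fun z : ℂ => z ^ (μ + 1) * ∑ k ∈ Finset.range (m + 1), n k / (z - s k))
      (Bornology.cobounded ℂ)
      (nhds (∑ k ∈ Finset.range (m + 1), n k * s k ^ μ)) := by
  set N := ∑ k ∈ Finset.range (m + 1), n k * s k ^ μ with hN
  have hlim : Tendsto (fun z : ℂ =>
      N + ∑ k ∈ Finset.range (m + 1), n k * (s k ^ (μ + 1) / (z - s k)))
      (Bornology.cobounded ℂ) (nhds N) := by
    have h2 : Tendsto (fun z : ℂ =>
        ∑ k ∈ Finset.range (m + 1), n k * (s k ^ (μ + 1) / (z - s k)))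
        (Bornology.cobounded ℂ) (nhds 0) := by
      have : Tendsto (fun z : ℂ =>
          ∑ k ∈ Finset.range (m + 1), n k * (s k ^ (μ + 1) / (z - s k)))
          (Bornology.cobounded ℂ)
          (nhds (∑ k ∈ Finset.range (m + 1), n k * (s k ^ (μ + 1) * 0))) := by
        refine tendsto_finset_sum _ fun k _ => Tendsto.const_mul _ ?_
        simp only [div_eq_mul_inv]
        exact Tendsto.const_mul _
          (tendsto_inv₀_cobounded.comp (tendsto_sub_const_cobounded' (s k)))
      simpa using this
    simpa using tendsto_const_nhds.add h2
  refine Tendsto.congr' ?_ hlim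
  have hev : ∀ᶠ z : ℂ in Bornology.cobounded ℂ, ∀ k ∈ Finset.range (m + 1), z ≠ s k :=
    (Filter.eventually_all_finset _).2 fun k _ => Bornology.eventually_ne_cobounded (s k)
  filter_upwards [hev] with z hz
  have hsum : ∀ k ∈ Finset.range (m + 1),
      n k * (z ^ (μ + 1) / (z - s k)) =
        n k * (∑ i ∈ Finset.range (μ + 1), z ^ i * s k ^ (μ - i)) +
          n k * (s k ^ (μ + 1) / (z - s k)) := by
    intro k hk
    have hzk : z - s k ≠ 0 := sub_ne_zero.2 (hz k hk)
    have hg : (∑ i ∈ Finset.range (μ + 1), z ^ i * s k ^ (μ - i)) =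
        (z ^ (μ + 1) - s k ^ (μ + 1)) / (z - s k) := by
      rw [eq_div_iff hzk]
      simpa using geom_sum₂_mul z (s k) (μ + 1)
    rw [hg, ← mul_add, ← add_div, sub_add_cancel]
  have hswap : ∑ k ∈ Finset.range (m + 1),
      n k * (∑ i ∈ Finset.range (μ + 1), z ^ i * s k ^ (μ - i)) = N := by
    have hc : ∑ k ∈ Finset.range (m + 1),
        n k * (∑ i ∈ Finset.range (μ + 1), z ^ i * s k ^ (μ - i)) =
        ∑ i ∈ Finset.range (μ + 1), z ^ i * ∑ k ∈ Finset.range (m + 1), n k * s k ^ (μ - i) := by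
      simp_rw [Finset.mul_sum]
      rw [Finset.sum_comm]
      exact Finset.sum_congr rfl fun i _ => Finset.sum_congr rfl fun k _ => by ring
    rw [hc, Finset.sum_eq_single_of_mem 0 (Finset.mem_range.2 (Nat.succ_pos μ))]
    · simp [hN]
    · intro i hi hi0
      have hi' := Finset.mem_range.1 hi
      rw [h0 (μ - i) (by omega), mul_zero]
  symm
  calc z ^ (μ + 1) * ∑ k ∈ Finset.range (m + 1), n k / (z - s k)
      = ∑ k ∈ Finset.range (m + 1), n k * (z ^ (μ + 1) / (z - s k)) := by
        rw [Finset.mul_sum]; exact Finset.sum_congr rfl fun k _ => by ring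
    _ = ∑ k ∈ Finset.range (m + 1),
        (n k * (∑ i ∈ Finset.range (μ + 1), z ^ i * s k ^ (μ - i)) +
          n k * (s k ^ (μ + 1) / (z - s k))) := Finset.sum_congr rfl hsum
    _ = N + ∑ k ∈ Finset.range (m + 1), n k * (s k ^ (μ + 1) / (z - s k)) := by
        rw [Finset.sum_add_distrib, hswap]

/-- Paper's Corollary 6.1: relative-degree result for the general (non-interpolatory)
barycentric form with numerator weights `n_k` and denominator weights `d_k`. -/
theorem barycentric_relative_degree_general (m : ℕ) (s n d : ℕ → ℂ) (μ ν : ℕ)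
    (hμ : μ ≤ m) (hν : ν ≤ m)
    (hnum0 : ∀ l < μ, ∑ k ∈ Finset.range (m + 1), n k * s k ^ l = 0)
    (hnum : ∑ k ∈ Finset.range (m + 1), n k * s k ^ μ ≠ 0)
    (hden0 : ∀ l < ν, ∑ k ∈ Finset.range (m + 1), d k * s k ^ l = 0)
    (hden : ∑ k ∈ Finset.range (m + 1), d k * s k ^ ν ≠ 0)
    (r : ℂ → ℂ)
    (hr : ∀ z : ℂ, r z = (∑ k ∈ Finset.range (m + 1), n k / (z - s k)) /
      (∑ k ∈ Finset.range (m + 1), d k / (z - s k))) :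
    Filter.Tendsto (fun z : ℂ => r z * z ^ ((μ : ℤ) - ν)) (Bornology.cobounded ℂ)
      (nhds ((∑ k ∈ Finset.range (m + 1), n k * s k ^ μ) /
        (∑ k ∈ Finset.range (m + 1), d k * s k ^ ν))) := by
  have hN := barycentric_key m s n μ hnum0
  have hD := barycentric_key m s d ν hden0
  have hdiv := hN.div hD hden
  refine Tendsto.congr' ?_ hdiv
  filter_upwards [Bornology.eventually_ne_cobounded (0 : ℂ)] with z hz
  simp only [Pi.div_apply]
  rw [hr z, mul_div_mul_comm]
  have hp : (z : ℂ) ^ (μ + 1) / z ^ (ν + 1) = z ^ ((μ : ℤ) - ν) := by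
    rw [← zpow_natCast z (μ + 1), ← zpow_natCast z (ν + 1), ← zpow_sub₀ hz]
    congr 1; push_cast; ring
  rw [hp, mul_comm]
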